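/- Let μ ≥ 0 satisfy the optimality first-order conditions with ‖μ‖ > 0, and let p be differentiable at ‖μ‖. Then the aggregate valuation at the optimum satisfies Σ_i v_i(μ_i) ≥ ‖μ‖·p(‖μ‖) + ‖μ‖²·p'(‖μ‖). -/
import Mathlib

open Finset Set

/-- At a profile `μ` satisfying the optimality first-order
conditions with `‖μ‖ > 0` (and `p` differentiable at `‖μ‖`), the aggregate
valuation satisfies `Σ_i v_i(μ_i) ≥ ‖μ‖·p(‖μ‖) + ‖μ‖²·p'(‖μ‖)`. -/
theorem statement_16
    (N : ℕ) (v v' : Fin N → ℝ → ℝ) (C C' p p' : ℝ → ℝ)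
    (hv_deriv : ∀ i x, HasDerivAt (v i) (v' i x) x)
    (hv_concave : ∀ i, ConcaveOn ℝ (Ici (0 : ℝ)) (v i))
    (hv_mono : ∀ i, MonotoneOn (v i) (Ici (0 : ℝ)))
    (hv0 : ∀ i, v i 0 = 0)
    (hC_deriv : ∀ x : ℝ, 0 ≤ x → HasDerivAt C (C' x) x)
    (hC_sconvex : StrictConvexOn ℝ (Ici (0 : ℝ)) C)
    (hC0 : C 0 = 0)
    (hCpos : ∀ g : ℝ, 0 < g → 0 < C g)
    (hp : ∀ g : ℝ, 0 < g → p g = C g / g)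
    (μ : Fin N → ℝ)
    (hμ_nonneg : ∀ i, 0 ≤ μ i)
    (hμ_total : 0 < ∑ i, μ i)
    (hp_deriv : HasDerivAt p (p' (∑ i, μ i)) (∑ i, μ i))
    (hC'_eq : C' (∑ i, μ i) = p (∑ i, μ i) + (∑ i, μ i) * p' (∑ i, μ i))
    (hμ_le : ∀ i, v' i (μ i) ≤ C' (∑ j, μ j))
    (hμ_eq : ∀ i, 0 < μ i → v' i (μ i) = C' (∑ j, μ j)) :
    (∑ i, μ i) * p (∑ i, μ i) + (∑ i, μ i) ^ 2 * p' (∑ i, μ i)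
      ≤ ∑ i, v i (μ i) := by
  set S := ∑ i, μ i with hS
  have key : ∀ i, μ i * C' S ≤ v i (μ i) := by
    intro i
    rcases eq_or_lt_of_le (hμ_nonneg i) with h0 | hpos
    · rw [← h0, zero_mul, hv0 i]
    · have hslope : C' S ≤ slope (v i) 0 (μ i) := by
        rw [← hμ_eq i hpos]
        exact (hv_concave i).le_slope_of_hasDerivAt (mem_Ici.mpr le_rfl) (mem_Ici.mpr (le_of_lt hpos)) hpos
          (hv_deriv i (μ i))
      rw [slope_def_field, hv0 i, sub_zero, sub_zero, div_eq_inv_mul] at hslope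
      calc μ i * C' S ≤ μ i * ((μ i)⁻¹ * v i (μ i)) := by
            exact mul_le_mul_of_nonneg_left hslope (le_of_lt hpos)
        _ = v i (μ i) := by field_simp
  calc S * p S + S ^ 2 * p' S = S * C' S := by rw [hC'_eq]; ring
    _ = ∑ i, μ i * C' S := by rw [hS, Finset.sum_mul]
    _ ≤ ∑ i, v i (μ i) := Finset.sum_le_sum fun i _ => key i
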